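/- Let d ≥ 1, let K be a complete separable metric space, and let N be a Borel measure on ℝ^d × K taking values in ℤ≥0 ∪ {∞} on every Borel set, such that N(A × K) < ∞ for every bounded Borel set A ⊆ ℝ^d and N({x} × K) ≤ 1 for every x ∈ ℝ^d. Then the support of N (the set of points every open neighborhood of which has positive N-measure) is the graph of a function from a locally finite subset of ℝ^d into K, this support is a closed, locally finite subset of ℝ^d × K, N equals the sum of the Dirac measures at the points of its support, and consequently N(A) = #(supp N ∩ A) for every Borel set A ⊆ ℝ^d × K. Moreover, the projection of supp N to ℝ^d (i.e. {x ∈ ℝ^d : (x,k) ∈ supp N for some k ∈ K}) equals the support of the marginal measure A ↦ N(A × K). -/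

import Mathlib

open MeasureTheory Filter Topology Metric Set
open scoped ENNReal

/-- The support of a Borel measure: the set of points every open neighborhood of which
has positive measure. -/
def measureSupport {X : Type*} [TopologicalSpace X] [MeasurableSpace X]
    (μ : MeasureTheory.Measure X) : Set X :=
  {p | ∀ U : Set X, IsOpen U → p ∈ U → 0 < μ U}

theorem stmt0 {d : ℕ} (hd : 1 ≤ d) {K : Type*} [MetricSpace K] [CompleteSpace K]
    [TopologicalSpace.SeparableSpace K] [MeasurableSpace K] [BorelSpace K]
    (N : Measure ((EuclideanSpace ℝ (Fin d)) × K))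
    (hint : ∀ s : Set ((EuclideanSpace ℝ (Fin d)) × K), MeasurableSet s →
      (∃ n : ℕ, N s = n) ∨ N s = ⊤)
    (hfin : ∀ A : Set (EuclideanSpace ℝ (Fin d)), MeasurableSet A → Bornology.IsBounded A →
      N (A ×ˢ (univ : Set K)) < ⊤)
    (hsingle : ∀ x : EuclideanSpace ℝ (Fin d), N ({x} ×ˢ (univ : Set K)) ≤ 1)
    (S : Set ((EuclideanSpace ℝ (Fin d)) × K)) (hS : S = measureSupport N) :
    -- S is the graph of a K-valued function:
    (∀ x k k', (x, k) ∈ S → (x, k') ∈ S → k = k') ∧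
    -- ... whose domain is a locally finite subset of ℝ^d:
    (∀ B : Set (EuclideanSpace ℝ (Fin d)), Bornology.IsBounded B →
      ({x | ∃ k, (x, k) ∈ S} ∩ B).Finite) ∧
    -- S is closed and locally finite in ℝ^d × K:
    IsClosed S ∧
    (∀ B : Set ((EuclideanSpace ℝ (Fin d)) × K), Bornology.IsBounded B → (S ∩ B).Finite) ∧
    -- N is the sum of the Dirac measures at the points of S:
    N = Measure.sum (fun p : S => Measure.dirac (p : (EuclideanSpace ℝ (Fin d)) × K)) ∧
    -- consequently N(A) = #(S ∩ A) for every Borel A: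
    (∀ A : Set ((EuclideanSpace ℝ (Fin d)) × K), MeasurableSet A →
      N A = ((S ∩ A).encard : ℝ≥0∞)) ∧
    -- the projection of S to ℝ^d is the support of the marginal measure A ↦ N(A × K):
    {x | ∃ k, (x, k) ∈ S} =
      {x | ∀ U : Set (EuclideanSpace ℝ (Fin d)), IsOpen U → x ∈ U →
        0 < N (U ×ˢ (univ : Set K))} := by
  have hmem : ∀ p : EuclideanSpace ℝ (Fin d) × K, p ∈ S ↔ ∀ U : Set (EuclideanSpace ℝ (Fin d) × K), IsOpen U → p ∈ U → 0 < N U := by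
    intro p; rw [hS]; exact Iff.rfl
  -- positive measurable sets have measure ≥ 1
  have hone : ∀ s : Set (EuclideanSpace ℝ (Fin d) × K), MeasurableSet s → 0 < N s → 1 ≤ N s := by
    intro s hs hpos
    rcases hint s hs with ⟨n, hn⟩ | h
    · rw [hn] at hpos ⊢
      have : n ≠ 0 := by rintro rfl; simp at hpos
      exact_mod_cast Nat.one_le_iff_ne_zero.mpr this
    · simp [h]
  -- each point of S has mass exactly 1
  have hle : ∀ p : EuclideanSpace ℝ (Fin d) × K, N {p} ≤ 1 := by
    intro p
    refine le_trans (measure_mono ?_) (hsingle p.1)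
    rintro q rfl
    exact ⟨rfl, trivial⟩
  have hmass : ∀ p ∈ S, N {p} = 1 := by
    intro p hp
    refine le_antisymm (hle p) ?_
    have hball : ∀ n : ℕ, 1 ≤ N (Metric.ball p (1/(n+1))) := by
      intro n
      exact hone _ measurableSet_ball
        ((hmem p).1 hp _ isOpen_ball (Metric.mem_ball_self (by positivity)))
    have hIcap : ⋂ n : ℕ, Metric.ball p (1/(n+1)) = {p} := by
      ext q
      simp only [mem_iInter, Metric.mem_ball, mem_singleton_iff]
      constructor
      · intro h
        have hdq : dist q p ≤ 0 := by
          refine le_of_forall_pos_le_add fun ε hε => ?_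
          obtain ⟨n, hn⟩ := exists_nat_one_div_lt hε
          have := (h n).trans hn
          linarith
        exact dist_le_zero.mp hdq
      · rintro rfl n
        simp only [dist_self]
        positivity
    have hanti : Antitone fun n : ℕ => Metric.ball p (1/(n+1)) := by
      intro m n hmn
      apply Metric.ball_subset_ball
      have h1 : (0:ℝ) < m + 1 := by positivity
      apply one_div_le_one_div_of_le h1
      exact_mod_cast Nat.succ_le_succ hmn
    have hfinb : N (Metric.ball p (1/((0:ℕ)+1))) ≠ ∞ := by
      have hsub : Metric.ball p (1/((0:ℕ)+1)) ⊆ (Metric.ball p.1 1) ×ˢ (univ : Set K) := by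
        intro q hq
        rw [Metric.mem_ball, Prod.dist_eq] at hq
        norm_num at hq
        exact ⟨Metric.mem_ball.mpr hq.1, trivial⟩
      exact (lt_of_le_of_lt (measure_mono hsub)
        (hfin _ measurableSet_ball Metric.isBounded_ball)).ne
    have := hanti.measure_iInter (μ := N)
      (fun n => measurableSet_ball.nullMeasurableSet) ⟨0, hfinb⟩
    rw [hIcap] at this
    rw [this]
    exact le_iInf hball
  -- local finiteness over bounded bases
  have hfinset : ∀ A : Set (EuclideanSpace ℝ (Fin d)), Bornology.IsBounded A →
      (S ∩ (A ×ˢ (univ : Set K))).Finite := by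
    intro A hA
    obtain ⟨r, hr⟩ := hA.subset_closedBall 0
    have hlt := hfin (Metric.closedBall 0 r) measurableSet_closedBall
      Metric.isBounded_closedBall
    rcases hint _ (measurableSet_closedBall.prod MeasurableSet.univ) with ⟨n, hn⟩ | htop
    swap
    · rw [htop] at hlt; exact absurd hlt (lt_irrefl _)
    by_contra hinf
    obtain ⟨F, hFsub, hFcard⟩ := Set.Infinite.exists_subset_card_eq hinf (n+1)
    have hFm : N (↑F : Set (EuclideanSpace ℝ (Fin d) × K)) = (F.card : ℝ≥0∞) := by
      have hFU : (↑F : Set (EuclideanSpace ℝ (Fin d) × K)) = ⋃ p ∈ F, {p} := by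
        ext q; simp
      rw [hFU, measure_biUnion_finset]
      · rw [Finset.sum_congr rfl fun p hp => hmass p (hFsub hp).1, Finset.sum_const,
          nsmul_eq_mul, mul_one]
      · intro p _ q _ hpq
        exact Set.disjoint_singleton.mpr hpq
      · intro p _; exact measurableSet_singleton p
    have hsub2 : (↑F : Set (EuclideanSpace ℝ (Fin d) × K)) ⊆ Metric.closedBall 0 r ×ˢ (univ : Set K) := by
      intro p hp
      exact ⟨hr (hFsub hp).2.1, trivial⟩
    have := measure_mono (μ := N) hsub2
    rw [hFm, hFcard, hn] at this
    exact absurd this (by exact_mod_cast Nat.not_succ_le_self n)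
  -- graph property
  have hgraph : ∀ (x : EuclideanSpace ℝ (Fin d)) (k k' : K), (x, k) ∈ S → (x, k') ∈ S → k = k' := by
    intro x k k' h1 h2
    by_contra hne
    have hdisj : Disjoint ({(x, k)} : Set (EuclideanSpace ℝ (Fin d) × K)) ({(x, k')} : Set (EuclideanSpace ℝ (Fin d) × K)) := by
      rw [Set.disjoint_singleton]
      simp [hne]
    have hsub : ({(x, k)} ∪ {(x, k')} : Set (EuclideanSpace ℝ (Fin d) × K)) ⊆ {x} ×ˢ (univ : Set K) := by
      rintro q (rfl | rfl) <;> exact ⟨rfl, trivial⟩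
    have h2le : (2 : ℝ≥0∞) ≤ N ({x} ×ˢ (univ : Set K)) := by
      calc (2 : ℝ≥0∞) = N {(x, k)} + N {(x, k')} := by
            rw [hmass _ h1, hmass _ h2]; norm_num
        _ = N ({(x, k)} ∪ {(x, k')}) :=
            (measure_union hdisj (measurableSet_singleton _)).symm
        _ ≤ _ := measure_mono hsub
    have := h2le.trans (hsingle x)
    norm_num at this
  -- S is closed
  have hclosed : IsClosed S := by
    rw [← isOpen_compl_iff, isOpen_iff_forall_mem_open]
    intro p hp
    have hp' : ¬ ∀ U : Set (EuclideanSpace ℝ (Fin d) × K), IsOpen U → p ∈ U → 0 < N U := fun h => hp ((hmem p).2 h)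
    push_neg at hp'
    obtain ⟨U, hUo, hpU, hU⟩ := hp'
    refine ⟨U, fun q hq hqS => ?_, hUo, hpU⟩
    exact absurd ((hmem q).1 hqS U hUo hq) (not_lt.mpr hU)
  -- complement of S is null
  have hnull : N Sᶜ = 0 := by
    have hch : ∀ p : ↥Sᶜ, ∃ U : Set (EuclideanSpace ℝ (Fin d) × K), IsOpen U ∧ (p : EuclideanSpace ℝ (Fin d) × K) ∈ U ∧ N U = 0 := by
      rintro ⟨p, hp⟩
      have hp' : ¬ ∀ U : Set (EuclideanSpace ℝ (Fin d) × K), IsOpen U → p ∈ U → 0 < N U := fun h => hp ((hmem p).2 h)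
      push_neg at hp'
      obtain ⟨U, hUo, hpU, hU⟩ := hp'
      exact ⟨U, hUo, hpU, le_antisymm hU zero_le⟩
    choose U hUo hpU hU0 using hch
    obtain ⟨T, hTc, hTU⟩ := TopologicalSpace.isOpen_iUnion_countable U hUo
    have hsub : Sᶜ ⊆ ⋃ i ∈ T, U i := by
      rw [hTU]
      intro p hp
      exact mem_iUnion.2 ⟨⟨p, hp⟩, hpU _⟩
    exact measure_mono_null hsub ((measure_biUnion_null_iff hTc).2 fun i _ => hU0 i)
  -- S is countable
  have hScount : S.Countable := by
    have hcov : S = ⋃ n : ℕ, S ∩ ((Metric.closedBall 0 n) ×ˢ (univ : Set K)) := by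
      ext p
      simp only [mem_iUnion, mem_inter_iff]
      constructor
      · intro hp
        refine ⟨⌈‖p.1‖⌉₊, hp, ?_, trivial⟩
        rw [Metric.mem_closedBall, dist_zero_right]
        exact Nat.le_ceil _
      · rintro ⟨n, hp, _⟩; exact hp
    rw [hcov]
    exact countable_iUnion fun n => (hfinset _ Metric.isBounded_closedBall).countable
  have hSmeas : MeasurableSet S := hScount.measurableSet
  -- counting formula for countable subsets of S
  have hcount : ∀ C : Set (EuclideanSpace ℝ (Fin d) × K), C ⊆ S → C.Countable → N C = (C.encard : ℝ≥0∞) := by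
    intro C hCS hCc
    calc N C = N (⋃ p ∈ C, ({p} : Set (EuclideanSpace ℝ (Fin d) × K))) := by rw [biUnion_of_singleton]
      _ = ∑' p : C, N {(p : EuclideanSpace ℝ (Fin d) × K)} :=
          measure_biUnion hCc (fun p _ q _ hpq => Set.disjoint_singleton.mpr hpq)
            (fun p _ => measurableSet_singleton p)
      _ = ∑' _ : C, (1 : ℝ≥0∞) := tsum_congr fun p => hmass _ (hCS p.2)
      _ = (C.encard : ℝ≥0∞) := ENNReal.tsum_set_one C
  -- main formula
  have hNA : ∀ A : Set (EuclideanSpace ℝ (Fin d) × K), MeasurableSet A → N A = ((S ∩ A).encard : ℝ≥0∞) := by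
    intro A hA
    have h0 : N (A \ S) = 0 := measure_mono_null (fun p hp => hp.2) hnull
    have h1 : N (A ∩ S) + N (A \ S) = N A := measure_inter_add_diff A hSmeas
    rw [h0, add_zero] at h1
    rw [← h1, hcount _ inter_subset_right (hScount.mono inter_subset_right), inter_comm]
  -- N = sum of diracs
  have hsum : N = Measure.sum (fun p : S => Measure.dirac (p : EuclideanSpace ℝ (Fin d) × K)) := by
    ext A hA
    rw [Measure.sum_apply _ hA, hNA A hA]
    symm
    calc (∑' p : S, Measure.dirac (p : EuclideanSpace ℝ (Fin d) × K) A)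
        = ∑' p : S, A.indicator (1 : (EuclideanSpace ℝ (Fin d) × K) → ℝ≥0∞) (p : EuclideanSpace ℝ (Fin d) × K) :=
          tsum_congr fun p => Measure.dirac_apply' _ hA
      _ = ∑' x, S.indicator (A.indicator (1 : (EuclideanSpace ℝ (Fin d) × K) → ℝ≥0∞)) x := tsum_subtype S _
      _ = ∑' x, (S ∩ A).indicator (1 : (EuclideanSpace ℝ (Fin d) × K) → ℝ≥0∞) x := by rw [Set.indicator_indicator]
      _ = ∑' _ : ↥(S ∩ A), (1 : ℝ≥0∞) := (tsum_subtype (S ∩ A) _).symm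
      _ = ((S ∩ A).encard : ℝ≥0∞) := ENNReal.tsum_set_one _
  -- local finiteness of S in the product
  have hlocfin : ∀ B : Set (EuclideanSpace ℝ (Fin d) × K), Bornology.IsBounded B → (S ∩ B).Finite := by
    intro B hB
    refine (hfinset _ hB.image_fst).subset ?_
    rintro p ⟨hpS, hpB⟩
    exact ⟨hpS, ⟨p, hpB, rfl⟩, trivial⟩
  -- locally finite domain
  have hdom : ∀ B : Set (EuclideanSpace ℝ (Fin d)), Bornology.IsBounded B →
      ({x | ∃ k, (x, k) ∈ S} ∩ B).Finite := by
    intro B hB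
    refine ((hfinset B hB).image Prod.fst).subset ?_
    rintro x ⟨⟨k, hk⟩, hxB⟩
    exact ⟨(x, k), ⟨hk, hxB, trivial⟩, rfl⟩
  -- projection statement
  have hproj : {x | ∃ k, (x, k) ∈ S} =
      {x | ∀ U : Set (EuclideanSpace ℝ (Fin d)), IsOpen U → x ∈ U → 0 < N (U ×ˢ (univ : Set K))} := by
    ext x
    simp only [mem_setOf_eq]
    constructor
    · rintro ⟨k, hk⟩ U hUo hxU
      exact (hmem (x, k)).1 hk (U ×ˢ (univ : Set K)) (hUo.prod isOpen_univ) ⟨hxU, trivial⟩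
    · intro hx
      by_contra hne
      push_neg at hne
      have hfd := hdom (Metric.closedBall x 1) Metric.isBounded_closedBall
      set D := {y | ∃ k, (y, k) ∈ S} ∩ Metric.closedBall x 1 with hD
      have hxD : x ∉ D := fun hxD' => by
        obtain ⟨k, hk⟩ := hxD'.1
        exact hne k hk
      obtain ⟨ε, hε, hball⟩ := Metric.isOpen_iff.mp hfd.isClosed.isOpen_compl x hxD
      set ε' := min ε 1 with hε'
      have hε'pos : 0 < ε' := lt_min hε one_pos
      have hpos := hx (Metric.ball x ε') Metric.isOpen_ball (Metric.mem_ball_self hε'pos)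
      rw [hNA _ (measurableSet_ball.prod MeasurableSet.univ)] at hpos
      have hne2 : (S ∩ (Metric.ball x ε' ×ˢ (univ : Set K))).Nonempty := by
        rw [← Set.encard_ne_zero]
        intro h
        rw [h] at hpos
        simp at hpos
      obtain ⟨p, hpS, hp1, _⟩ := hne2
      have hd1 : dist p.1 x < ε' := Metric.mem_ball.mp hp1
      have hpD : p.1 ∈ D := by
        refine ⟨⟨p.2, hpS⟩, ?_⟩
        rw [Metric.mem_closedBall]
        exact le_trans hd1.le (min_le_right ε 1)
      have : p.1 ∈ Dᶜ :=
        hball (Metric.mem_ball.mpr (lt_of_lt_of_le hd1 (min_le_left ε 1)))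
      exact this hpD
  exact ⟨hgraph, hdom, hclosed, hlocfin, hsum, hNA, hproj⟩
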